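/- Let n ≥ 1, let V : ℝⁿ → ℝ be continuous and ℤⁿ-periodic, let p ∈ ℝⁿ, λ ∈ ℝ, and let v : ℝⁿ → ℝ be a ℤⁿ-periodic C² function satisfying the cell problem −(1/2)Δv(x) + (1/2)|p + ∇v(x)|² + V(x) = λ for all x ∈ ℝⁿ. Then (1/2)|p|² + inf_{ℝⁿ} V ≤ λ ≤ (1/2)|p|² + sup_{ℝⁿ} V. -/

import Mathlib

open scoped RealInnerProductSpace
open MeasureTheory

/-- The Euclidean Laplacian: sum of second partial derivatives. -/
noncomputable def lap {n : ℕ} (f : EuclideanSpace ℝ (Fin n) → ℝ)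
    (x : EuclideanSpace ℝ (Fin n)) : ℝ :=
  ∑ i : Fin n,
    fderiv ℝ (fun y => fderiv ℝ f y (EuclideanSpace.single i 1)) x (EuclideanSpace.single i 1)

/-- The divergence of a vector field: sum of partial derivatives of the components. -/
noncomputable def dvg {n : ℕ} (F : EuclideanSpace ℝ (Fin n) → EuclideanSpace ℝ (Fin n))
    (x : EuclideanSpace ℝ (Fin n)) : ℝ :=
  ∑ i : Fin n, fderiv ℝ (fun y => F y i) x (EuclideanSpace.single i 1)

/-- A function on ℝⁿ is ℤⁿ-periodic if it is invariant under translation by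
every integer vector. -/
def IsZnPeriodic {n : ℕ} {α : Type*} (f : EuclideanSpace ℝ (Fin n) → α) : Prop :=
  ∀ (x : EuclideanSpace ℝ (Fin n)) (k : Fin n → ℤ),
    f (x + ∑ i : Fin n, (k i : ℝ) • EuclideanSpace.single i (1 : ℝ)) = f x

/-- The unit cube [0,1]ⁿ in ℝⁿ. -/
def unitCube (n : ℕ) : Set (EuclideanSpace ℝ (Fin n)) :=
  {x | ∀ i, x i ∈ Set.Icc (0 : ℝ) 1}

/-- 1D second-derivative test at a global max with zero first derivative. -/
lemma second_deriv_nonpos {g g' : ℝ → ℝ} {c : ℝ}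
    (hg : ∀ t, HasDerivAt g (g' t) t) (hg' : HasDerivAt g' c 0)
    (hmax : ∀ t, g t ≤ g 0) (h0 : g' 0 = 0) : c ≤ 0 := by
  by_contra hc
  push_neg at hc
  have hslope : Filter.Tendsto (slope g' 0) (nhdsWithin 0 {(0:ℝ)}ᶜ) (nhds c) :=
    hasDerivAt_iff_tendsto_slope.1 hg'
  have hev : ∀ᶠ t in nhdsWithin 0 {(0:ℝ)}ᶜ, 0 < slope g' 0 t :=
    hslope.eventually (eventually_gt_nhds hc)
  have hev' : ∀ᶠ t in nhdsWithin 0 (Set.Ioi 0), 0 < slope g' 0 t :=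
    hev.filter_mono (nhdsWithin_mono 0 (fun t ht => ne_of_gt ht))
  obtain ⟨u, hu, hsub⟩ := mem_nhdsGT_iff_exists_Ioo_subset.1 hev'
  -- on Ioo 0 u, g' t > 0
  have hupos : 0 < u := hu
  have hpos : ∀ t ∈ Set.Ioo (0:ℝ) u, 0 < g' t := by
    intro t ht
    have := hsub ht
    have hslope_t : slope g' 0 t = g' t / t := by
      simp [slope, h0, div_eq_inv_mul]
    simp only [Set.mem_setOf_eq, hslope_t] at this
    exact (div_pos_iff.1 this).elim (fun h => h.1) (fun h => absurd ht.1 (not_lt.2 h.2.le))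
  -- MVT on [0, u]
  obtain ⟨ξ, hξ, hξeq⟩ := exists_hasDerivAt_eq_slope g g' hupos
    (fun t _ => (hg t).continuousAt.continuousWithinAt) (fun t ht => hg t)
  have h1 : g' ξ ≤ 0 := by
    rw [hξeq]
    apply div_nonpos_of_nonpos_of_nonneg
    · linarith [hmax u]
    · linarith
  exact absurd (hpos ξ hξ) (not_lt.2 h1)

/-- 1D second-derivative test at a global min with zero first derivative. -/
lemma second_deriv_nonneg {g g' : ℝ → ℝ} {c : ℝ}
    (hg : ∀ t, HasDerivAt g (g' t) t) (hg' : HasDerivAt g' c 0)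
    (hmin : ∀ t, g 0 ≤ g t) (h0 : g' 0 = 0) : 0 ≤ c := by
  have := second_deriv_nonpos (g := fun t => -g t) (g' := fun t => -g' t) (c := -c)
    (fun t => (hg t).neg) hg'.neg (fun t => neg_le_neg (hmin t)) (by simp [h0])
  linarith

lemma key_max {n : ℕ} {v : EuclideanSpace ℝ (Fin n) → ℝ} (hv : ContDiff ℝ 2 v)
    {x₀ : EuclideanSpace ℝ (Fin n)} (hmax : ∀ x, v x ≤ v x₀) :
    gradient v x₀ = 0 ∧ lap v x₀ ≤ 0 := by
  have hvd : Differentiable ℝ v := hv.differentiable (by norm_num)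
  have hf0 : fderiv ℝ v x₀ = 0 :=
    (IsLocalMax.fderiv_eq_zero (Filter.Eventually.of_forall fun x => hmax x))
  have hfd : ContDiff ℝ 1 (fderiv ℝ v) := hv.fderiv_right (by norm_num)
  constructor
  · rw [gradient, hf0, map_zero]
  · apply Finset.sum_nonpos
    intro i _
    set e : EuclideanSpace ℝ (Fin n) := EuclideanSpace.single i 1 with he
    set φ : EuclideanSpace ℝ (Fin n) → ℝ := fun y => fderiv ℝ v y e with hφ
    have hφd : Differentiable ℝ φ := by
      have : Differentiable ℝ (fderiv ℝ v) := hfd.differentiable (by norm_num)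
      exact fun y => ((ContinuousLinearMap.apply ℝ ℝ e).differentiableAt).comp y (this y)
    set L : ℝ → EuclideanSpace ℝ (Fin n) := fun t => x₀ + t • e with hL
    have hLd : ∀ t, HasDerivAt L e t := by
      intro t
      simpa [hL] using ((hasDerivAt_id t).smul_const e).const_add x₀
    have hg : ∀ t, HasDerivAt (fun t => v (L t)) (φ (L t)) t := fun t =>
      (hvd (L t)).hasFDerivAt.comp_hasDerivAt t (hLd t)
    have hg' : HasDerivAt (fun t => φ (L t)) (fderiv ℝ φ x₀ e) 0 := by
      have h1 : HasFDerivAt φ (fderiv ℝ φ x₀) (L 0) := by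
        have : L 0 = x₀ := by simp [hL]
        rw [this]; exact (hφd x₀).hasFDerivAt
      exact h1.comp_hasDerivAt 0 (hLd 0)
    have key := second_deriv_nonpos hg hg'
      (fun t => by simpa [hL] using hmax (L t))
      (by simp [hφ, hL, hf0])
    exact key

lemma key_min {n : ℕ} {v : EuclideanSpace ℝ (Fin n) → ℝ} (hv : ContDiff ℝ 2 v)
    {x₀ : EuclideanSpace ℝ (Fin n)} (hmin : ∀ x, v x₀ ≤ v x) :
    gradient v x₀ = 0 ∧ 0 ≤ lap v x₀ := by
  have hvd : Differentiable ℝ v := hv.differentiable (by norm_num)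
  have hf0 : fderiv ℝ v x₀ = 0 :=
    (IsLocalMin.fderiv_eq_zero (Filter.Eventually.of_forall fun x => hmin x))
  have hfd : ContDiff ℝ 1 (fderiv ℝ v) := hv.fderiv_right (by norm_num)
  constructor
  · rw [gradient, hf0, map_zero]
  · apply Finset.sum_nonneg
    intro i _
    set e : EuclideanSpace ℝ (Fin n) := EuclideanSpace.single i 1 with he
    set φ : EuclideanSpace ℝ (Fin n) → ℝ := fun y => fderiv ℝ v y e with hφ
    have hφd : Differentiable ℝ φ := by
      have : Differentiable ℝ (fderiv ℝ v) := hfd.differentiable (by norm_num)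
      exact fun y => ((ContinuousLinearMap.apply ℝ ℝ e).differentiableAt).comp y (this y)
    set L : ℝ → EuclideanSpace ℝ (Fin n) := fun t => x₀ + t • e with hL
    have hLd : ∀ t, HasDerivAt L e t := by
      intro t
      simpa [hL] using ((hasDerivAt_id t).smul_const e).const_add x₀
    have hg : ∀ t, HasDerivAt (fun t => v (L t)) (φ (L t)) t := fun t =>
      (hvd (L t)).hasFDerivAt.comp_hasDerivAt t (hLd t)
    have hg' : HasDerivAt (fun t => φ (L t)) (fderiv ℝ φ x₀ e) 0 := by
      have h1 : HasFDerivAt φ (fderiv ℝ φ x₀) (L 0) := by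
        have : L 0 = x₀ := by simp [hL]
        rw [this]; exact (hφd x₀).hasFDerivAt
      exact h1.comp_hasDerivAt 0 (hLd 0)
    exact second_deriv_nonneg hg hg'
      (fun t => by simpa [hL] using hmin (L t))
      (by simp [hφ, hL, hf0])

lemma sum_single_apply {n : ℕ} (c : Fin n → ℝ) (j : Fin n) :
    (∑ i : Fin n, c i • EuclideanSpace.single i (1:ℝ)) j = c j := by
  calc (∑ i : Fin n, c i • EuclideanSpace.single i (1:ℝ)) j
      = EuclideanSpace.proj (𝕜 := ℝ) j (∑ i : Fin n, c i • EuclideanSpace.single i (1:ℝ)) := rfl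
    _ = ∑ i : Fin n, EuclideanSpace.proj (𝕜 := ℝ) j (c i • EuclideanSpace.single i (1:ℝ)) :=
        map_sum _ _ _
    _ = c j := by
        simp only [_root_.map_smul]
        simp [EuclideanSpace.single_apply, EuclideanSpace.proj]

lemma exists_cube_rep {n : ℕ} (x : EuclideanSpace ℝ (Fin n)) :
    ∃ y ∈ unitCube n, ∃ k : Fin n → ℤ,
      x = y + ∑ i : Fin n, (k i : ℝ) • EuclideanSpace.single i (1:ℝ) := by
  refine ⟨x - ∑ i : Fin n, ((⌊x i⌋ : ℝ)) • EuclideanSpace.single i (1:ℝ), ?_, fun i => ⌊x i⌋, by abel⟩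
  intro j
  have : (x - ∑ i : Fin n, ((⌊x i⌋ : ℝ)) • EuclideanSpace.single i (1:ℝ)) j = x j - ⌊x j⌋ := by
    have h := sum_single_apply (fun i => ((⌊x i⌋ : ℝ))) j
    calc (x - ∑ i : Fin n, ((⌊x i⌋ : ℝ)) • EuclideanSpace.single i (1:ℝ)) j
        = x j - (∑ i : Fin n, ((⌊x i⌋ : ℝ)) • EuclideanSpace.single i (1:ℝ)) j := rfl
      _ = x j - ⌊x j⌋ := by rw [h]
  rw [this]
  constructor
  · linarith [Int.floor_le (x j)]
  · linarith [Int.lt_floor_add_one (x j)]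

lemma isCompact_unitCube (n : ℕ) : IsCompact (unitCube n) := by
  have : unitCube n = WithLp.toLp 2 '' Set.pi Set.univ (fun _ : Fin n => Set.Icc (0:ℝ) 1) := by
    ext x
    exact ⟨fun h => ⟨x.ofLp, Set.mem_univ_pi.2 fun i => h i, rfl⟩,
      by rintro ⟨y, hy, rfl⟩ i; exact Set.mem_univ_pi.1 hy i⟩
  rw [this]
  exact (isCompact_univ_pi fun _ => isCompact_Icc).image (PiLp.continuous_toLp 2 _)

lemma periodic_range_subset {n : ℕ} {α : Type*} {f : EuclideanSpace ℝ (Fin n) → α}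
    (hp : IsZnPeriodic f) : Set.range f ⊆ f '' unitCube n := by
  rintro - ⟨x, rfl⟩
  obtain ⟨y, hy, k, hk⟩ := exists_cube_rep x
  exact ⟨y, hy, by rw [hk, hp y k]⟩

lemma periodic_exists_max {n : ℕ} {f : EuclideanSpace ℝ (Fin n) → ℝ}
    (hf : Continuous f) (hp : IsZnPeriodic f) : ∃ x₀, ∀ x, f x ≤ f x₀ := by
  obtain ⟨x₀, hx₀, hmax⟩ := (isCompact_unitCube n).exists_isMaxOn ⟨0, fun i => by norm_num⟩
    hf.continuousOn
  refine ⟨x₀, fun x => ?_⟩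
  obtain ⟨y, hy, k, hk⟩ := exists_cube_rep x
  rw [hk, hp y k]
  exact hmax hy


/-- the eigenvalue of the cell problem
−(1/2)Δv + (1/2)|p + ∇v|² + V = λ, with v a ℤⁿ-periodic C² solution and V
continuous and ℤⁿ-periodic, satisfies
(1/2)|p|² + inf V ≤ λ ≤ (1/2)|p|² + sup V. -/
theorem cell_problem_eigenvalue_bounds (n : ℕ) (hn : 1 ≤ n)
    (V : EuclideanSpace ℝ (Fin n) → ℝ) (hVc : Continuous V) (hVp : IsZnPeriodic V)
    (p : EuclideanSpace ℝ (Fin n)) (lam : ℝ)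
    (v : EuclideanSpace ℝ (Fin n) → ℝ) (hv : ContDiff ℝ 2 v) (hvp : IsZnPeriodic v)
    (hcell : ∀ x, -(1/2) * lap v x + (1/2) * ‖p + gradient v x‖^2 + V x = lam) :
    (1/2) * ‖p‖^2 + (⨅ x, V x) ≤ lam ∧ lam ≤ (1/2) * ‖p‖^2 + (⨆ x, V x) := by
  have hbdd : BddBelow (Set.range V) ∧ BddAbove (Set.range V) := by
    have hc := (isCompact_unitCube n).image hVc
    exact ⟨hc.bddBelow.mono (periodic_range_subset hVp),
      hc.bddAbove.mono (periodic_range_subset hVp)⟩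
  constructor
  · obtain ⟨x₀, hmax⟩ := periodic_exists_max hv.continuous hvp
    obtain ⟨hgrad, hlap⟩ := key_max hv hmax
    have h := hcell x₀
    rw [hgrad, add_zero] at h
    have hV : (⨅ x, V x) ≤ V x₀ := ciInf_le hbdd.1 x₀
    nlinarith
  · obtain ⟨x₁, hmin'⟩ := periodic_exists_max (f := fun x => -v x) hv.continuous.neg
      (fun x k => by simp [hvp x k])
    have hmin : ∀ x, v x₁ ≤ v x := fun x => by have := hmin' x; linarith
    obtain ⟨hgrad, hlap⟩ := key_min hv hmin
    have h := hcell x₁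
    rw [hgrad, add_zero] at h
    have hV : V x₁ ≤ ⨆ x, V x := le_ciSup hbdd.2 x₁
    nlinarith
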